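/- Let (c, U, V) solve the slab problem with U ≥ 0, and suppose a > ln(1/θ) where θ = max_{x∈[0,a]} U(x) > 0. Then c ≤ 2 + (χ/√d + χ/d) ‖V‖_{L^∞}. (In particular, at a first-touching point x₀ ∈ (-a,a) of U with α(x) = A₀e^{-x}, one has U(x₀)=α(x₀), U'(x₀)=-α(x₀), U''(x₀) ≤ α(x₀), and substituting into the equation yields the speed bound.) -/

import Mathlib

open Real MeasureTheory

noncomputable def Kd (d x : ℝ) : ℝ := (1 / (2 * Real.sqrt d)) * Real.exp (-|x| / Real.sqrt d)

private lemma expIic (b x : ℝ) (hb : 0 < b) :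
    MeasureTheory.IntegrableOn (fun y : ℝ => Real.exp (b * y)) (Set.Iic x) := by
  have h0 : MeasureTheory.IntegrableOn (fun y : ℝ => Real.exp (-b * y)) (Set.Ioi (-x)) :=
    exp_neg_integrableOn_Ioi _ hb
  have h1 : MeasureTheory.Integrable
      ((Set.Ioi (-x)).indicator (fun y : ℝ => Real.exp (-b * y))) :=
    (MeasureTheory.integrable_indicator_iff measurableSet_Ioi).mpr h0
  have h2 := h1.comp_neg
  have h3 : (fun y : ℝ => ((Set.Ioi (-x)).indicator (fun z : ℝ => Real.exp (-b * z))) (-y))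
      = (Set.Iio x).indicator (fun y : ℝ => Real.exp (b * y)) := by
    funext y
    by_cases hy : y < x
    · rw [Set.indicator_of_mem (Set.mem_Ioi.mpr (by linarith : -x < -y)),
        Set.indicator_of_mem (Set.mem_Iio.mpr hy)]
      congr 1
      ring
    · rw [Set.indicator_of_notMem (fun hmem => hy (by linarith [Set.mem_Ioi.mp hmem])),
        Set.indicator_of_notMem (fun hmem => hy (Set.mem_Iio.mp hmem))]
  rw [h3] at h2
  have h4 := (MeasureTheory.integrable_indicator_iff measurableSet_Iio).mp h2
  exact h4.congr_set_ae (MeasureTheory.Iio_ae_eq_Iic (a := x)).symm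

private lemma integrable_kernel (σ : ℝ) (hσ : 0 < σ) :
    MeasureTheory.Integrable (fun y : ℝ => Real.exp (-|y| / σ)) := by
  rw [← MeasureTheory.integrableOn_univ, ← Set.Iic_union_Ioi (a := (0:ℝ)),
    MeasureTheory.integrableOn_union]
  constructor
  · apply (expIic σ⁻¹ 0 (inv_pos.mpr hσ)).congr_fun ?_ measurableSet_Iic
    intro y hy
    have hy' : y ≤ 0 := hy
    show Real.exp (σ⁻¹ * y) = Real.exp (-|y| / σ)
    rw [abs_of_nonpos hy', neg_neg, div_eq_mul_inv]
    ring_nf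
  · apply (exp_neg_integrableOn_Ioi 0 (inv_pos.mpr hσ)).congr_fun ?_ measurableSet_Ioi
    intro y hy
    have hy' : (0:ℝ) < y := hy
    show Real.exp (-σ⁻¹ * y) = Real.exp (-|y| / σ)
    rw [abs_of_pos hy', neg_div, div_eq_mul_inv]
    ring_nf

set_option maxHeartbeats 1000000 in
private lemma Vreg {d : ℝ} (hd : 0 < d) {Ut V : ℝ → ℝ} (hUtc : Continuous Ut)
    (hUt0 : ∀ y, 0 ≤ Ut y) {C : ℝ} (hUtC : ∀ y, Ut y ≤ C)
    (hV : ∀ x, V x = ∫ y : ℝ, Kd d (x - y) * Ut y) :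
    ∃ G : ℝ → ℝ, Differentiable ℝ G ∧ ∀ x, HasDerivAt V (G x) x := by
  have hσ : 0 < Real.sqrt d := Real.sqrt_pos.mpr hd
  set σ := Real.sqrt d with hσdef
  have hC0 : 0 ≤ C := le_trans (hUt0 0) (hUtC 0)
  set f1 : ℝ → ℝ := fun y => Real.exp (σ⁻¹ * y) * Ut y with hf1
  set f2 : ℝ → ℝ := fun y => Real.exp (-σ⁻¹ * y) * Ut y with hf2
  have hf1c : Continuous f1 :=
    (Real.continuous_exp.comp (continuous_const.mul continuous_id)).mul hUtc
  have hf2c : Continuous f2 :=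
    (Real.continuous_exp.comp (continuous_const.mul continuous_id)).mul hUtc
  -- integrability of f1 on Iic x
  have hint1 : ∀ x : ℝ, MeasureTheory.IntegrableOn f1 (Set.Iic x) := by
    intro x
    apply MeasureTheory.Integrable.mono' ((expIic σ⁻¹ x (inv_pos.mpr hσ)).const_mul C)
    · exact hf1c.aestronglyMeasurable.restrict
    · apply MeasureTheory.ae_of_all
      intro y
      have h1 : 0 ≤ Real.exp (σ⁻¹ * y) * Ut y := mul_nonneg (Real.exp_pos _).le (hUt0 y)
      rw [Real.norm_eq_abs, abs_of_nonneg h1]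
      have h2 : 0 < Real.exp (σ⁻¹ * y) := Real.exp_pos _
      nlinarith [hUtC y]
  have hint2 : ∀ x : ℝ, MeasureTheory.IntegrableOn f2 (Set.Ioi x) := by
    intro x
    apply MeasureTheory.Integrable.mono' ((exp_neg_integrableOn_Ioi x (inv_pos.mpr hσ)).const_mul C)
    · exact hf2c.aestronglyMeasurable.restrict
    · apply MeasureTheory.ae_of_all
      intro y
      have h1 : 0 ≤ Real.exp (-σ⁻¹ * y) * Ut y := mul_nonneg (Real.exp_pos _).le (hUt0 y)
      rw [Real.norm_eq_abs, abs_of_nonneg h1]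
      have h2 : 0 < Real.exp (-σ⁻¹ * y) := Real.exp_pos _
      nlinarith [hUtC y]
  -- derivatives of A and B
  have hAd : ∀ x : ℝ, HasDerivAt (fun z => ∫ y in Set.Iic z, f1 y) (f1 x) x := by
    intro x
    have hAfun : (fun z => ∫ y in Set.Iic z, f1 y)
        = (fun z => (∫ y in Set.Iic (0:ℝ), f1 y) + ∫ y in (0:ℝ)..z, f1 y) := by
      funext z
      have h := intervalIntegral.integral_Iic_sub_Iic (hint1 0) (hint1 z)
      linarith
    rw [hAfun]
    exact (intervalIntegral.integral_hasDerivAt_right (hf1c.intervalIntegrable 0 x)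
      (hf1c.stronglyMeasurableAtFilter _ _) hf1c.continuousAt).const_add _
  have hBsub : ∀ u v : ℝ, u ≤ v →
      (∫ y in Set.Ioi u, f2 y) - (∫ y in Set.Ioi v, f2 y) = ∫ y in u..v, f2 y := by
    intro u v huv
    have hu : Set.Ioc u v ∪ Set.Ioi v = Set.Ioi u := Set.Ioc_union_Ioi_eq_Ioi huv
    have hdisj : Disjoint (Set.Ioc u v) (Set.Ioi v) := by
      apply Set.disjoint_left.mpr
      intro y hy1 hy2
      exact absurd hy1.2 (not_le.mpr hy2)
    have h5 := MeasureTheory.setIntegral_union hdisj measurableSet_Ioi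
      ((hint2 u).mono_set (by rw [← hu]; exact Set.subset_union_left)) (hint2 v)
    rw [hu] at h5
    rw [intervalIntegral.integral_of_le huv]
    linarith
  have hBd : ∀ x : ℝ, HasDerivAt (fun z => ∫ y in Set.Ioi z, f2 y) (-(f2 x)) x := by
    intro x
    have hBfun : (fun z => ∫ y in Set.Ioi z, f2 y)
        = (fun z => (∫ y in Set.Ioi (0:ℝ), f2 y) - ∫ y in (0:ℝ)..z, f2 y) := by
      funext z
      rcases le_total (0:ℝ) z with h | h
      · have := hBsub 0 z h; linarith
      · have h6 := hBsub z 0 h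
        have h7 : ∫ y in z..(0:ℝ), f2 y = -∫ y in (0:ℝ)..z, f2 y :=
          intervalIntegral.integral_symm 0 z
        linarith
    rw [hBfun]
    exact (intervalIntegral.integral_hasDerivAt_right (hf2c.intervalIntegrable 0 x)
      (hf2c.stronglyMeasurableAtFilter _ _) hf2c.continuousAt).const_sub _
  -- integrability of the kernel integrand
  have hi : ∀ x : ℝ, MeasureTheory.Integrable (fun y : ℝ => Kd d (x - y) * Ut y) := by
    intro x
    have hmaster := (integrable_kernel σ hσ).comp_sub_left x
    apply MeasureTheory.Integrable.mono' (hmaster.const_mul (C * (1 / (2 * σ))))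
    · have hKc : Continuous (fun y : ℝ => Kd d (x - y) * Ut y) := by
        simp only [Kd, ← hσdef]
        have hc1 : Continuous (fun y : ℝ => -|x - y| / σ) :=
          (((continuous_const.sub continuous_id).abs).neg).div_const _
        exact (continuous_const.mul (Real.continuous_exp.comp hc1)).mul hUtc
      exact hKc.aestronglyMeasurable
    · apply MeasureTheory.ae_of_all
      intro y
      have h8 : 0 ≤ Kd d (x - y) := by
        simp only [Kd]
        positivity
      rw [Real.norm_eq_abs, abs_of_nonneg (mul_nonneg h8 (hUt0 y))]
      simp only [Kd, ← hσdef]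
      have h9 : 0 ≤ 1 / (2 * σ) * Real.exp (-|x - y| / σ) := by positivity
      calc 1 / (2 * σ) * Real.exp (-|x - y| / σ) * Ut y
          ≤ 1 / (2 * σ) * Real.exp (-|x - y| / σ) * C := mul_le_mul_of_nonneg_left (hUtC y) h9
        _ = C * (1 / (2 * σ)) * Real.exp (-|x - y| / σ) := by ring
  -- the splitting of V
  have hsplit : ∀ x : ℝ, V x = (Real.exp (-σ⁻¹ * x) * (∫ y in Set.Iic x, f1 y)
      + Real.exp (σ⁻¹ * x) * (∫ y in Set.Ioi x, f2 y)) / (2 * σ) := by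
    intro x
    rw [hV x, ← MeasureTheory.integral_add_compl
      (measurableSet_Iic : MeasurableSet (Set.Iic x)) (hi x), Set.compl_Iic]
    have e1 : ∫ y in Set.Iic x, Kd d (x - y) * Ut y
        = (Real.exp (-σ⁻¹ * x) / (2 * σ)) * ∫ y in Set.Iic x, f1 y := by
      rw [← MeasureTheory.integral_const_mul]
      apply MeasureTheory.setIntegral_congr_fun measurableSet_Iic
      intro y hy
      have hy' : y ≤ x := hy
      simp only [Kd, ← hσdef, hf1]
      rw [abs_of_nonneg (by linarith : (0:ℝ) ≤ x - y),
        show -(x - y) / σ = -σ⁻¹ * x + σ⁻¹ * y by field_simp; ring, Real.exp_add]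
      ring
    have e2 : ∫ y in Set.Ioi x, Kd d (x - y) * Ut y
        = (Real.exp (σ⁻¹ * x) / (2 * σ)) * ∫ y in Set.Ioi x, f2 y := by
      rw [← MeasureTheory.integral_const_mul]
      apply MeasureTheory.setIntegral_congr_fun measurableSet_Ioi
      intro y hy
      have hy' : x < y := hy
      simp only [Kd, ← hσdef, hf2]
      rw [abs_of_neg (by linarith : x - y < 0),
        show -(-(x - y)) / σ = σ⁻¹ * x + -σ⁻¹ * y by field_simp; ring, Real.exp_add]
      ring
    rw [e1, e2]
    ring
  -- conclusion
  refine ⟨fun x => (-σ⁻¹ * (Real.exp (-σ⁻¹ * x) * (∫ y in Set.Iic x, f1 y))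
      + σ⁻¹ * (Real.exp (σ⁻¹ * x) * (∫ y in Set.Ioi x, f2 y))) / (2 * σ), ?_, ?_⟩
  · have hAdiff : Differentiable ℝ (fun z => ∫ y in Set.Iic z, f1 y) :=
      fun x => (hAd x).differentiableAt
    have hBdiff : Differentiable ℝ (fun z => ∫ y in Set.Ioi z, f2 y) :=
      fun x => (hBd x).differentiableAt
    have he1 : Differentiable ℝ (fun x : ℝ => Real.exp (-σ⁻¹ * x)) :=
      Real.differentiable_exp.comp ((differentiable_const _).mul differentiable_id)
    have he2 : Differentiable ℝ (fun x : ℝ => Real.exp (σ⁻¹ * x)) :=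
      Real.differentiable_exp.comp ((differentiable_const _).mul differentiable_id)
    exact (((he1.mul hAdiff).const_mul _).add ((he2.mul hBdiff).const_mul _)).div_const _
  · intro x
    rw [show V = fun x => (Real.exp (-σ⁻¹ * x) * (∫ y in Set.Iic x, f1 y)
      + Real.exp (σ⁻¹ * x) * (∫ y in Set.Ioi x, f2 y)) / (2 * σ) from funext hsplit]
    have he1 : HasDerivAt (fun x : ℝ => Real.exp (-σ⁻¹ * x))
        (Real.exp (-σ⁻¹ * x) * (-σ⁻¹)) x := by
      have := ((hasDerivAt_id x).const_mul (-σ⁻¹)).exp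
      simpa using this
    have he2 : HasDerivAt (fun x : ℝ => Real.exp (σ⁻¹ * x))
        (Real.exp (σ⁻¹ * x) * σ⁻¹) x := by
      have := ((hasDerivAt_id x).const_mul σ⁻¹).exp
      simpa using this
    have H := (((he1.mul (hAd x)).add (he2.mul (hBd x))).div_const (2 * σ))
    refine H.congr_deriv ?_
    simp only [hf1, hf2]
    ring

set_option maxHeartbeats 1000000 in
theorem speed_upper_bound (a τ χ d c θ MV : ℝ) (ha : 0 < a) (hτ : τ ∈ Set.Icc (0:ℝ) 1)
    (hχ : 0 < χ) (hd : 0 < d) (hθ : θ ∈ Set.Ioo (0:ℝ) (1/4))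
    (haθ : Real.log (1 / θ) < a)
    (U Ut V : ℝ → ℝ)
    (hU : ContDiffOn ℝ 2 U (Set.Icc (-a) a))
    (hU_nonneg : ∀ x ∈ Set.Icc (-a) a, 0 ≤ U x)
    (hUt : ∀ x, Ut x = if x ≤ -a then 1 else if x < a then U x else 0)
    (hV : ∀ x, V x = ∫ y : ℝ, Kd d (x - y) * Ut y)
    (hVeq : ∀ x, -(d * deriv (deriv V) x) = Ut x - V x)
    (hV' : ∀ x, |deriv V x| ≤ V x / Real.sqrt d)
    (heq : ∀ x ∈ Set.Ioo (-a) a,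
      -(c * deriv U x) + τ * χ * deriv (fun y => U y * deriv V y) x
        = deriv (deriv U) x + U x * (1 - U x))
    (hbc1 : U (-a) = 1) (hbc2 : U a = 0)
    (hmax : IsGreatest (U '' Set.Icc 0 a) θ)
    (hMV : ∀ x, |V x| ≤ MV) :
    c ≤ 2 + (χ / Real.sqrt d + χ / d) * MV := by
  obtain ⟨hθ0, hθ4⟩ := hθ
  obtain ⟨hτ0, hτ1⟩ := hτ
  have hσ : 0 < Real.sqrt d := Real.sqrt_pos.mpr hd
  set σ := Real.sqrt d with hσdef
  have hMV0 : 0 ≤ MV := le_trans (abs_nonneg _) (hMV 0)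
  have haa : -a < a := by linarith
  -- Ut is the clamped extension of U
  have hUt_eq : Ut = fun y => U (max (-a) (min a y)) := by
    funext y
    rw [hUt y]
    rcases le_or_gt y (-a) with h1 | h1
    · rw [if_pos h1, min_eq_right (le_trans h1 haa.le), max_eq_left h1, hbc1]
    · rcases lt_or_ge y a with h2 | h2
      · rw [if_neg (not_le.mpr h1), if_pos h2, min_eq_right h2.le, max_eq_right h1.le]
      · rw [if_neg (not_le.mpr h1), if_neg (not_lt.mpr h2), min_eq_left h2,
          max_eq_right haa.le, hbc2]
  have hUc : ContinuousOn U (Set.Icc (-a) a) := hU.continuousOn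
  have hclamp_mem : ∀ y : ℝ, max (-a) (min a y) ∈ Set.Icc (-a) a := by
    intro y
    exact ⟨le_max_left _ _, max_le haa.le (min_le_left _ _)⟩
  have hUtc : Continuous Ut := by
    rw [hUt_eq]
    apply hUc.comp_continuous
    · exact continuous_const.max (continuous_const.min continuous_id)
    · exact hclamp_mem
  have hUt0 : ∀ y, 0 ≤ Ut y := by
    intro y; rw [hUt_eq]; exact hU_nonneg _ (hclamp_mem y)
  obtain ⟨C0, hC0⟩ := (isCompact_Icc : IsCompact (Set.Icc (-a) a)).exists_bound_of_continuousOn hUc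
  have hUtC : ∀ y, Ut y ≤ C0 := by
    intro y; rw [hUt_eq]
    exact le_trans (le_abs_self _)
      (by simpa [Real.norm_eq_abs] using hC0 _ (hclamp_mem y))
  obtain ⟨G, hGdiff, hGd⟩ := Vreg hd hUtc hUt0 hUtC hV
  have hVd : ∀ x, DifferentiableAt ℝ (deriv V) x := by
    have hVG : deriv V = G := funext fun x => (hGd x).deriv
    rw [hVG]; exact fun x => hGdiff x
  -- the maximum point of f = U * exp
  have hfc : ContinuousOn (fun x => U x * Real.exp x) (Set.Icc (-a) a) :=
    hUc.mul Real.continuous_exp.continuousOn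
  obtain ⟨p, hpmem, hpmax⟩ := (isCompact_Icc : IsCompact (Set.Icc (-a) a)).exists_isMaxOn
    (Set.nonempty_Icc.mpr haa.le) hfc
  obtain ⟨x0, hx0mem, hx0⟩ := hmax.1
  have hx0Icc : x0 ∈ Set.Icc (-a) a := ⟨le_trans (by linarith [hx0mem.1]) hx0mem.1, hx0mem.2⟩
  have hθfp : θ ≤ U p * Real.exp p := by
    have h5 : U x0 * Real.exp x0 ≤ U p * Real.exp p := hpmax hx0Icc
    rw [hx0] at h5
    have h2 : (1:ℝ) ≤ Real.exp x0 := by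
      rw [← Real.exp_zero]; exact Real.exp_le_exp.mpr hx0mem.1
    nlinarith [mul_nonneg hθ0.le (sub_nonneg.mpr h2)]
  have hpIoo : p ∈ Set.Ioo (-a) a := by
    obtain ⟨hp1, hp2⟩ := hpmem
    constructor
    · rcases lt_or_eq_of_le hp1 with h | h
      · exact h
      · exfalso
        have hfma : U p * Real.exp p = Real.exp (-a) := by rw [← h, hbc1, one_mul]
        have hlt : Real.exp (-a) < θ := by
          have h3 : Real.log (1 / θ) = -Real.log θ := by rw [one_div, Real.log_inv]
          have h4 : -a < Real.log θ := by linarith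
          calc Real.exp (-a) < Real.exp (Real.log θ) := Real.exp_lt_exp.mpr h4
            _ = θ := Real.exp_log hθ0
        linarith
    · rcases lt_or_eq_of_le hp2 with h | h
      · exact h
      · exfalso
        have : U p * Real.exp p = 0 := by rw [h, hbc2, zero_mul]
        linarith
  have hMpos : 0 < U p := by
    nlinarith [Real.exp_pos p, hθfp, hθ0]
  -- differentiability infrastructure
  have hUdiff : ∀ x ∈ Set.Ioo (-a) a, HasDerivAt U (deriv U x) x := by
    intro x hx
    have h1 : DifferentiableOn ℝ U (Set.Ioo (-a) a) :=
      (hU.mono Set.Ioo_subset_Icc_self).differentiableOn (by norm_num)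
    exact ((h1 x hx).differentiableAt (isOpen_Ioo.mem_nhds hx)).hasDerivAt
  have hU2 : ∀ x ∈ Set.Ioo (-a) a, HasDerivAt (deriv U) (deriv (deriv U) x) x := by
    intro x hx
    have h1 : ContDiffOn ℝ 1 (deriv U) (Set.Ioo (-a) a) :=
      (hU.mono Set.Ioo_subset_Icc_self).deriv_of_isOpen isOpen_Ioo (by norm_num)
    have h2 : DifferentiableOn ℝ (deriv U) (Set.Ioo (-a) a) := h1.differentiableOn (by norm_num)
    exact ((h2 x hx).differentiableAt (isOpen_Ioo.mem_nhds hx)).hasDerivAt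
  -- U'(p) = -U(p)
  have hUp : HasDerivAt U (deriv U p) p := hUdiff p hpIoo
  have hfd : HasDerivAt (fun x => U x * Real.exp x)
      (deriv U p * Real.exp p + U p * Real.exp p) p := hUp.mul (Real.hasDerivAt_exp p)
  have hflocal : IsLocalMax (fun x => U x * Real.exp x) p :=
    hpmax.isLocalMax (Icc_mem_nhds hpIoo.1 hpIoo.2)
  have hderiv0 : deriv U p * Real.exp p + U p * Real.exp p = 0 := by
    have h1 := hflocal.deriv_eq_zero
    rw [hfd.deriv] at h1
    exact h1
  have hU'p : deriv U p = -U p := by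
    have h5 : (deriv U p + U p) * Real.exp p = 0 := by rw [add_mul]; linarith
    rcases mul_eq_zero.mp h5 with h6 | h6
    · linarith
    · exact absurd h6 (Real.exp_pos p).ne'
  -- derivative of the comparison function
  have hΦd : ∀ x ∈ Set.Ioo (-a) a, HasDerivAt (fun y => U y * deriv V y)
      (deriv (fun y => U y * deriv V y) x) x := by
    intro x hx
    exact ((hUdiff x hx).differentiableAt.mul (hVd x)).hasDerivAt
  have hgd : ∀ x ∈ Set.Ioo (-a) a, HasDerivAt
      (fun y => -(c * U y) + τ * χ * (U y * deriv V y) - deriv U y + U p * Real.exp (p - y))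
      (U x * (1 - U x) - U p * Real.exp (p - x)) x := by
    intro x hx
    have h1 : HasDerivAt (fun y => -(c * U y)) (-(c * deriv U x)) x :=
      ((hUdiff x hx).const_mul c).neg
    have h2 : HasDerivAt (fun y => τ * χ * (U y * deriv V y))
        (τ * χ * deriv (fun y => U y * deriv V y) x) x := (hΦd x hx).const_mul (τ * χ)
    have h4 : HasDerivAt (fun y : ℝ => p - y) (-1 : ℝ) x := by
      simpa using (hasDerivAt_id x).const_sub p
    have h3 : HasDerivAt (fun y => U p * Real.exp (p - y)) (-(U p * Real.exp (p - x))) x := by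
      have h5 := (h4.exp).const_mul (U p)
      refine h5.congr_deriv ?_
      ring
    have h6 := ((h1.add h2).sub (hU2 x hx)).add h3
    refine h6.congr_deriv ?_
    linarith [heq x hx]
  -- the key estimate
  have hkey : ∀ ε : ℝ, 0 < ε →
      c * U p ≤ 2 * U p + τ * χ * (U p * (MV / σ)) + ε := by
    intro ε hε
    have hden : 0 < |c| + τ * χ * (MV / σ) + 1 := by positivity
    set ε' := ε / (|c| + τ * χ * (MV / σ) + 1) with hε'def
    have hε'pos : 0 < ε' := div_pos hε hden
    have hε'den : ε' * (|c| + τ * χ * (MV / σ) + 1) = ε := div_mul_cancel₀ ε hden.ne'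
    -- pick b close to a where U is small
    have hUca : ContinuousWithinAt U (Set.Icc (-a) a) a :=
      hUc a (Set.right_mem_Icc.mpr haa.le)
    have htend : Filter.Tendsto U (nhdsWithin a (Set.Icc (-a) a)) (nhds 0) := by
      have h1 := hUca
      rw [ContinuousWithinAt, hbc2] at h1
      exact h1
    have hev : ∀ᶠ x in nhdsWithin a (Set.Icc (-a) a), U x < ε' :=
      htend.eventually_lt_const hε'pos
    rw [eventually_nhdsWithin_iff] at hev
    obtain ⟨δ, hδpos, hδ⟩ := Metric.eventually_nhds_iff.mp hev
    set b := max p (a - min (δ / 2) ((a - p) / 2)) with hbdef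
    have hbp : p ≤ b := le_max_left _ _
    have hmin : 0 < min (δ / 2) ((a - p) / 2) := lt_min (by linarith) (by linarith [hpIoo.2])
    have hba : b < a := by
      apply max_lt hpIoo.2
      linarith
    have hbma : a - min (δ / 2) ((a - p) / 2) ≤ b := le_max_right _ _
    have hbIcc : -a < b := lt_of_lt_of_le hpIoo.1 hbp
    -- MVT on [b, a]
    have hcont2 : ContinuousOn U (Set.Icc b a) :=
      hUc.mono (Set.Icc_subset_Icc (by linarith) le_rfl)
    have hdiff2 : ∀ x ∈ Set.Ioo b a, HasDerivAt U (deriv U x) x := by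
      intro x hx
      exact hUdiff x ⟨by linarith [hx.1], hx.2⟩
    obtain ⟨ξ, hξmem, hξ⟩ := exists_hasDerivAt_eq_slope U (deriv U) hba hcont2 hdiff2
    have hξIoo : ξ ∈ Set.Ioo (-a) a := ⟨by linarith [hξmem.1], hξmem.2⟩
    have hξIcc : ξ ∈ Set.Icc (-a) a := ⟨hξIoo.1.le, hξIoo.2.le⟩
    have hUb0 : 0 ≤ U b := hU_nonneg b ⟨by linarith, hba.le⟩
    have hU'ξ : deriv U ξ ≤ 0 := by
      rw [hξ, hbc2]
      exact div_nonpos_iff.mpr (Or.inr ⟨by linarith, by linarith⟩)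
    have hUξ : U ξ < ε' := by
      have hdist : dist ξ a < δ := by
        rw [Real.dist_eq, abs_of_neg (by linarith [hξmem.2] : ξ - a < 0)]
        have h7 : min (δ / 2) ((a - p) / 2) ≤ δ / 2 := min_le_left _ _
        have h8 : b < ξ := hξmem.1
        linarith
      exact hδ hdist hξIcc
    have hUξ0 : 0 ≤ U ξ := hU_nonneg ξ hξIcc
    have hpξ : p ≤ ξ := le_trans hbp hξmem.1.le
    -- monotonicity of the comparison function on [p, ξ]
    have hsub : Set.Icc p ξ ⊆ Set.Ioo (-a) a := by
      intro y hy
      exact ⟨by linarith [hy.1, hpIoo.1], by linarith [hy.2, hξIoo.2]⟩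
    have hgc : ContinuousOn
        (fun y => -(c * U y) + τ * χ * (U y * deriv V y) - deriv U y + U p * Real.exp (p - y))
        (Set.Icc p ξ) := by
      intro y hy
      exact ((hgd y (hsub hy)).continuousAt).continuousWithinAt
    have hgdiff : DifferentiableOn ℝ
        (fun y => -(c * U y) + τ * χ * (U y * deriv V y) - deriv U y + U p * Real.exp (p - y))
        (interior (Set.Icc p ξ)) := by
      intro y hy
      rw [interior_Icc] at hy
      exact ((hgd y (hsub (Set.Ioo_subset_Icc_self hy))).differentiableAt).differentiableWithinAt
    have hg'le : ∀ y ∈ interior (Set.Icc p ξ), deriv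
        (fun y => -(c * U y) + τ * χ * (U y * deriv V y) - deriv U y + U p * Real.exp (p - y))
        y ≤ 0 := by
      intro y hy
      rw [interior_Icc] at hy
      have hyIoo := hsub (Set.Ioo_subset_Icc_self hy)
      rw [(hgd y hyIoo).deriv]
      have h1 : U y * Real.exp y ≤ U p * Real.exp p := hpmax ⟨hyIoo.1.le, hyIoo.2.le⟩
      have h2 : 0 ≤ U y := hU_nonneg y ⟨hyIoo.1.le, hyIoo.2.le⟩
      have h3 : U y ≤ U p * Real.exp (p - y) := by
        rw [Real.exp_sub, ← mul_div_assoc, le_div_iff₀ (Real.exp_pos y)]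
        exact h1
      nlinarith
    have hanti := antitoneOn_of_deriv_nonpos (convex_Icc p ξ) hgc hgdiff hg'le
    have hgle : -(c * U ξ) + τ * χ * (U ξ * deriv V ξ) - deriv U ξ + U p * Real.exp (p - ξ)
        ≤ -(c * U p) + τ * χ * (U p * deriv V p) - deriv U p + U p * Real.exp (p - p) :=
      hanti (Set.left_mem_Icc.mpr hpξ) (Set.right_mem_Icc.mpr hpξ) hpξ
    rw [hU'p, sub_self, Real.exp_zero, mul_one] at hgle
    -- bounds on the error terms
    have hτχ : 0 ≤ τ * χ := mul_nonneg hτ0 hχ.le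
    have hMVσ : 0 ≤ MV / σ := div_nonneg hMV0 hσ.le
    have hinvσ : (0:ℝ) ≤ σ⁻¹ := (inv_pos.mpr hσ).le
    have hdivle : V p / σ ≤ MV / σ := by
      have h2 : V p ≤ MV := le_trans (le_abs_self _) (hMV p)
      calc V p / σ = V p * σ⁻¹ := div_eq_mul_inv _ _
        _ ≤ MV * σ⁻¹ := mul_le_mul_of_nonneg_right h2 hinvσ
        _ = MV / σ := (div_eq_mul_inv _ _).symm
    have hVpb : deriv V p ≤ MV / σ :=
      le_trans (le_trans (le_abs_self _) (hV' p)) hdivle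
    have hdivle2 : V ξ / σ ≤ MV / σ := by
      have h2 : V ξ ≤ MV := le_trans (le_abs_self _) (hMV ξ)
      calc V ξ / σ = V ξ * σ⁻¹ := div_eq_mul_inv _ _
        _ ≤ MV * σ⁻¹ := mul_le_mul_of_nonneg_right h2 hinvσ
        _ = MV / σ := (div_eq_mul_inv _ _).symm
    have hVξb : -deriv V ξ ≤ MV / σ :=
      le_trans (le_trans (neg_le_abs _) (hV' ξ)) hdivle2
    have B1 : τ * χ * (U p * deriv V p) ≤ τ * χ * (U p * (MV / σ)) :=
      mul_le_mul_of_nonneg_left (mul_le_mul_of_nonneg_left hVpb hMpos.le) hτχ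
    have B2 : -(τ * χ * (U ξ * deriv V ξ)) ≤ τ * χ * (ε' * (MV / σ)) := by
      have b2a : U ξ * (-deriv V ξ) ≤ U ξ * (MV / σ) := mul_le_mul_of_nonneg_left hVξb hUξ0
      have b2b : U ξ * (MV / σ) ≤ ε' * (MV / σ) := mul_le_mul_of_nonneg_right hUξ.le hMVσ
      have b2c := mul_le_mul_of_nonneg_left (le_trans b2a b2b) hτχ
      nlinarith [b2c]
    have b3a : c * U ξ ≤ |c| * U ξ := mul_le_mul_of_nonneg_right (le_abs_self c) hUξ0
    have b3b : |c| * U ξ ≤ |c| * ε' := mul_le_mul_of_nonneg_left hUξ.le (abs_nonneg c)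
    have B4 : 0 ≤ U p * Real.exp (p - ξ) := mul_nonneg hMpos.le (Real.exp_pos _).le
    linarith only [hgle, B1, B2, b3a, b3b, B4, hU'ξ, hε'den, hε'pos.le]
  -- conclude
  have hfin1 : c * U p ≤ 2 * U p + τ * χ * (U p * (MV / σ)) := by
    by_contra hcon
    push_neg at hcon
    have h1 := hkey ((c * U p - (2 * U p + τ * χ * (U p * (MV / σ)))) / 2) (by linarith)
    linarith
  have hfin2 : c ≤ 2 + τ * χ * (MV / σ) := by
    have h2 : c * U p ≤ (2 + τ * χ * (MV / σ)) * U p := by nlinarith [hfin1]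
    exact le_of_mul_le_mul_right h2 hMpos
  have h3 : τ * (χ * (MV / σ)) ≤ 1 * (χ * (MV / σ)) :=
    mul_le_mul_of_nonneg_right hτ1 (mul_nonneg hχ.le (div_nonneg hMV0 hσ.le))
  have h4 : 0 ≤ χ / d * MV := mul_nonneg (div_nonneg hχ.le hd.le) hMV0
  have h5 : τ * χ * (MV / σ) ≤ χ / σ * MV := by
    have : τ * (χ * (MV / σ)) ≤ 1 * (χ * (MV / σ)) := h3
    calc τ * χ * (MV / σ) = τ * (χ * (MV / σ)) := by ring
      _ ≤ 1 * (χ * (MV / σ)) := h3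
      _ = χ / σ * MV := by ring
  have h6 : (χ / σ + χ / d) * MV = χ / σ * MV + χ / d * MV := by ring
  linarith [hfin2, h5, h4, h6]
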